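/- Let I be a squarefree monomial ideal in S = K[x₁,…,xₙ] over a field K. Then the following are equivalent: (1) I^(2) = I²; (2) whenever three minimal generators x^{H₁}, x^{H₂}, x^{H₃} of I make a special triangle (i.e., there are vertices i, j, k with H₁∩{i,j,k}={j,k}, H₂∩{i,j,k}={i,k}, H₃∩{i,j,k}={i,j}), the monomial x^{H₁∩H₂∩H₃}·x^{H₁∪H₂∪H₃} belongs to I². -/

import Mathlib

open MvPolynomial CategoryTheory

/-- `Δ` is a simplicial complex on the vertex set `V`: it is closed under subsets,
contains the empty face and contains every singleton. -/
def IsSimplicialComplex {V : Type} (Δ : Set (Finset V)) : Prop :=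
  (∀ F ∈ Δ, ∀ G, G ⊆ F → G ∈ Δ) ∧ (∅ : Finset V) ∈ Δ ∧ ∀ v : V, ({v} : Finset V) ∈ Δ

/-- The Stanley–Reisner ideal of `Δ`: the ideal generated by the squarefree monomials
`∏_{i ∈ F} x_i` for the non-faces `F` of `Δ`. -/
noncomputable def SRIdeal (K : Type) [Field K] {V : Type} (Δ : Set (Finset V)) :
    Ideal (MvPolynomial V K) :=
  Ideal.span ((fun F : Finset V => ∏ i ∈ F, X i) '' {F | F ∉ Δ})

/-- The irrelevant maximal ideal `m = (x_v : v ∈ V)` of the polynomial ring. -/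
noncomputable def mxIdeal (K : Type) [Field K] (V : Type) : Ideal (MvPolynomial V K) :=
  Ideal.span (Set.range (X : V → MvPolynomial V K))

/-- The depth of the ideal `m` on the ring `A`: the supremum of the lengths of
regular sequences on `A` contained in `m`. -/
noncomputable def ringDepth (A : Type) [CommRing A] (m : Ideal A) : ℕ∞ :=
  sSup {d : ℕ∞ | ∃ rs : List A, (rs.length : ℕ∞) = d ∧ (∀ r ∈ rs, r ∈ m) ∧
    RingTheory.Sequence.IsRegular A rs}

/-- `S ⧸ J` is Cohen–Macaulay: its depth (with respect to the image of the maximal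
ideal `m`) equals its Krull dimension. -/
def IsCMQuot (S : Type) [CommRing S] (m J : Ideal S) : Prop :=
  ((ringDepth (S ⧸ J) (m.map (Ideal.Quotient.mk J)) : ℕ∞) : WithBot ℕ∞) = ringKrullDim (S ⧸ J)

/-- The second symbolic power of an ideal `I`: the intersection of `P ^ 2` over the
minimal primes `P` of `I`. -/
noncomputable def symb2 {S : Type} [CommRing S] (I : Ideal S) : Ideal S :=
  ⨅ P ∈ I.minimalPrimes, P ^ 2

/-- `Ext_A^i(A/m, A)`. -/
noncomputable def extPow (A : Type) [CommRing A] (m : Ideal A) (i : ℕ) : ModuleCat A :=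
  ((Ext A (ModuleCat A) i).obj (Opposite.op (ModuleCat.of A (A ⧸ m)))).obj (ModuleCat.of A A)

/-- `S ⧸ J` (with maximal ideal the image of `m`) is Gorenstein: it is Cohen–Macaulay and,
with `d = dim S/J` and `k = (S/J)/m` the residue field, the Bass numbers are those of a
Gorenstein ring: `Ext^i(k, S/J) = 0` for `i ≠ d` and `Ext^d(k, S/J) ≅ k`. -/
def IsGorQuot (S : Type) [CommRing S] (m J : Ideal S) : Prop :=
  IsCMQuot S m J ∧ ∃ d : ℕ, ((d : ℕ∞) : WithBot ℕ∞) = ringKrullDim (S ⧸ J) ∧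
    (∀ i : ℕ, i ≠ d → Subsingleton (extPow (S ⧸ J) (m.map (Ideal.Quotient.mk J)) i)) ∧
    Nonempty ((extPow (S ⧸ J) (m.map (Ideal.Quotient.mk J)) d) ≃ₗ[S ⧸ J]
      ((S ⧸ J) ⧸ (m.map (Ideal.Quotient.mk J))))

/-- `S ⧸ J` is quasi-Buchsbaum: `m` annihilates the local cohomology module
`H_m^i(S/J)` for all `i < dim S/J`. -/
def IsQuasiBuchsbaum (S : Type) [CommRing S] (m J : Ideal S) : Prop :=
  ∀ i : ℕ, ((i : ℕ∞) : WithBot ℕ∞) < ringKrullDim (S ⧸ J) →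
    ∀ r ∈ m, ∀ x : (localCohomology m i).obj (ModuleCat.of S (S ⧸ J)), r • x = 0

/-- `S ⧸ J` has finite local cohomology (FLC): the local cohomology module `H_m^i(S/J)`
has finite length (equivalently, is both Noetherian and Artinian) for all `i < dim S/J`. -/
def HasFLC (S : Type) [CommRing S] (m J : Ideal S) : Prop :=
  ∀ i : ℕ, ((i : ℕ∞) : WithBot ℕ∞) < ringKrullDim (S ⧸ J) →
    IsNoetherian S ((localCohomology m i).obj (ModuleCat.of S (S ⧸ J))) ∧
    IsArtinian S ((localCohomology m i).obj (ModuleCat.of S (S ⧸ J)))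

/-- Serre's condition `(S₂)`: for every prime `P` of `A`,
`depth A_P ≥ min (dim A_P) 2`. -/
def SerreS2 (A : Type) [CommRing A] : Prop :=
  ∀ (P : Ideal A) (hP : P.IsPrime),
    haveI := hP
    min (ringKrullDim (Localization.AtPrime P)) 2 ≤
      ((ringDepth (Localization.AtPrime P)
        (IsLocalRing.maximalIdeal (Localization.AtPrime P)) : ℕ∞) : WithBot ℕ∞)

/-- The link of a face `F` in `Δ`. -/
def linkOf {V : Type} [DecidableEq V] (Δ : Set (Finset V)) (F : Finset V) : Set (Finset V) :=
  {H | H ∈ Δ ∧ H ∩ F = ∅ ∧ H ∪ F ∈ Δ}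

/-- The 1-skeleton of the complex `Γ` (the graph on the vertices of `Γ` whose edges are the
1-dimensional faces of `Γ`) is connected of diameter at most 2: any two distinct vertices
are joined by a path of length at most 2. -/
def skeletonDiamLE2 {V : Type} [DecidableEq V] (Γ : Set (Finset V)) : Prop :=
  ∀ u v : V, ({u} : Finset V) ∈ Γ → ({v} : Finset V) ∈ Γ → u ≠ v →
    (({u, v} : Finset V) ∈ Γ ∨ ∃ w : V, ({u, w} : Finset V) ∈ Γ ∧ ({w, v} : Finset V) ∈ Γ)

/-- `linkOf Δ F` has dimension at least 1, i.e. it has a face with at least 2 vertices. -/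
def linkDimGE1 {V : Type} [DecidableEq V] (Δ : Set (Finset V)) (F : Finset V) : Prop :=
  ∃ H ∈ linkOf Δ F, 2 ≤ H.card

/-- The squarefree monomial ideal generated by the monomials `x^H = ∏_{a ∈ H} x_a`, `H ∈ E`. -/
noncomputable def sqfIdeal (K : Type) [Field K] {V : Type} (E : Set (Finset V)) :
    Ideal (MvPolynomial V K) :=
  Ideal.span ((fun H : Finset V => ∏ a ∈ H, X a) '' E)

/-- The edges `H₁, H₂, H₃` make the special triangle `{i, j, k}`. -/
def MakeSpecialTriangle {V : Type} [DecidableEq V] (H₁ H₂ H₃ : Finset V) (i j k : V) : Prop :=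
  i ≠ j ∧ j ≠ k ∧ i ≠ k ∧
  H₁ ∩ ({i, j, k} : Finset V) = {j, k} ∧
  H₂ ∩ ({i, j, k} : Finset V) = {i, k} ∧
  H₃ ∩ ({i, j, k} : Finset V) = {i, j}

open Pointwise

namespace Stmt9Aux

variable {n : ℕ} {K : Type} [Field K]

/-- exponent vector of a squarefree monomial -/
noncomputable def eH (H : Finset (Fin n)) : Fin n →₀ ℕ := ∑ a ∈ H, Finsupp.single a 1

lemma eH_apply (H : Finset (Fin n)) (b : Fin n) : eH H b = if b ∈ H then 1 else 0 := by
  classical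
  rw [eH, Finsupp.finset_sum_apply]
  have h1 : ∀ a ∈ H, (Finsupp.single a 1 : Fin n →₀ ℕ) b = if a = b then 1 else 0 :=
    fun a _ => Finsupp.single_apply
  rw [Finset.sum_congr rfl h1]
  exact Finset.sum_ite_eq' H b (fun _ => 1)

lemma prod_X_eq (H : Finset (Fin n)) :
    (∏ a ∈ H, X a : MvPolynomial (Fin n) K) = monomial (eH H) 1 := by
  classical
  have hsupp : (eH H).support = H := by
    ext a
    simp [Finsupp.mem_support_iff, eH_apply]
  rw [← prod_X_pow_eq_monomial, hsupp]
  refine Finset.prod_congr rfl fun a ha => ?_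
  rw [eH_apply, if_pos ha, pow_one]

noncomputable def monIdeal (K : Type) [Field K] {n : ℕ} (A : Set (Fin n →₀ ℕ)) :
    Ideal (MvPolynomial (Fin n) K) :=
  Ideal.span ((fun u => (monomial u (1 : K) : MvPolynomial (Fin n) K)) '' A)

lemma mem_monIdeal {A : Set (Fin n →₀ ℕ)} {f : MvPolynomial (Fin n) K} :
    f ∈ monIdeal K A ↔ ∀ d ∈ f.support, ∃ u ∈ A, u ≤ d := by
  classical
  constructor
  · intro hf
    refine Submodule.span_induction ?_ ?_ ?_ ?_ hf
    · rintro x ⟨u, hu, rfl⟩ d hd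
      rw [support_monomial, if_neg (one_ne_zero)] at hd
      rw [Finset.mem_singleton] at hd
      exact ⟨u, hu, le_of_eq hd.symm⟩
    · intro d hd; simp at hd
    · intro x y _ _ ihx ihy d hd
      have := MvPolynomial.support_add (p := x) (q := y) hd
      rcases Finset.mem_union.1 this with h | h
      · exact ihx d h
      · exact ihy d h
    · intro r x hx ih d hd
      have hd' : d ∈ (r * x).support := hd
      have := support_mul r x hd'
      rw [Finset.mem_add] at this
      obtain ⟨u, hu, v, hv, rfl⟩ := this
      obtain ⟨w, hw, hwle⟩ := ih v hv
      exact ⟨w, hw, hwle.trans (le_add_self)⟩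
  · intro h
    rw [← support_sum_monomial_coeff f]
    refine Ideal.sum_mem _ fun d hd => ?_
    obtain ⟨u, hu, hle⟩ := h d hd
    have : monomial d (coeff d f) = monomial u (1 : K) * monomial (d - u) (coeff d f) := by
      rw [monomial_mul, one_mul, add_tsub_cancel_of_le hle]
    rw [this]
    exact Ideal.mul_mem_right _ _ (Ideal.subset_span ⟨u, hu, rfl⟩)

lemma monIdeal_mul (A B : Set (Fin n →₀ ℕ)) :
    monIdeal K A * monIdeal K B = monIdeal K (A + B) := by
  rw [monIdeal, monIdeal, Ideal.span_mul_span']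
  congr 1
  ext f
  constructor
  · rintro ⟨x, ⟨u, hu, rfl⟩, y, ⟨v, hv, rfl⟩, rfl⟩
    refine ⟨u + v, ⟨u, hu, v, hv, rfl⟩, ?_⟩
    show (monomial (u + v)) (1 : K) = monomial u 1 * monomial v 1
    rw [monomial_mul, one_mul]
  · rintro ⟨w, ⟨u, hu, v, hv, rfl⟩, rfl⟩
    refine ⟨monomial u 1, ⟨u, hu, rfl⟩, monomial v 1, ⟨v, hv, rfl⟩, ?_⟩
    show monomial u (1 : K) * monomial v 1 = monomial (u + v) 1
    rw [monomial_mul, one_mul]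

lemma sqfIdeal_eq (E : Set (Finset (Fin n))) :
    sqfIdeal K E = monIdeal K (eH '' E) := by
  rw [sqfIdeal, monIdeal, Set.image_image]
  congr 1
  exact Set.image_congr fun H _ => prod_X_eq H

lemma sqfIdeal_sq_eq (E : Set (Finset (Fin n))) :
    (sqfIdeal K E) ^ 2 = monIdeal K ((eH '' E) + (eH '' E)) := by
  rw [pow_two, sqfIdeal_eq, monIdeal_mul]

lemma mem_sq_iff {E : Set (Finset (Fin n))} {f : MvPolynomial (Fin n) K} :
    f ∈ (sqfIdeal K E) ^ 2 ↔
      ∀ d ∈ f.support, ∃ F₁ ∈ E, ∃ F₂ ∈ E, eH F₁ + eH F₂ ≤ d := by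
  rw [sqfIdeal_sq_eq, mem_monIdeal]
  constructor
  · intro h d hd
    obtain ⟨u, hu, hle⟩ := h d hd
    obtain ⟨a, ⟨F₁, hF₁, rfl⟩, b, ⟨F₂, hF₂, rfl⟩, rfl⟩ := hu
    exact ⟨F₁, hF₁, F₂, hF₂, hle⟩
  · intro h d hd
    obtain ⟨F₁, hF₁, F₂, hF₂, hle⟩ := h d hd
    exact ⟨eH F₁ + eH F₂, ⟨eH F₁, ⟨F₁, hF₁, rfl⟩, eH F₂, ⟨F₂, hF₂, rfl⟩, rfl⟩, hle⟩

end Stmt9Aux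

namespace Stmt9Aux

variable {n : ℕ} {K : Type} [Field K]

lemma pair_le_iff (F₁ F₂ : Finset (Fin n)) (d : Fin n →₀ ℕ) :
    eH F₁ + eH F₂ ≤ d ↔ (∀ a ∈ F₁ ∪ F₂, 1 ≤ d a) ∧ ∀ a ∈ F₁ ∩ F₂, 2 ≤ d a := by
  classical
  rw [Finsupp.le_def]
  constructor
  · intro h
    constructor
    · intro a ha
      have := h a
      rw [Finsupp.add_apply, eH_apply, eH_apply] at this
      rcases Finset.mem_union.1 ha with h' | h'
      · rw [if_pos h'] at this; omega
      · rw [if_pos h' (α := ℕ)] at this; omega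
    · intro a ha
      have := h a
      rw [Finsupp.add_apply, eH_apply, eH_apply, if_pos (Finset.mem_inter.1 ha).1,
        if_pos (Finset.mem_inter.1 ha).2] at this
      omega
  · rintro ⟨h1, h2⟩ a
    rw [Finsupp.add_apply, eH_apply, eH_apply]
    by_cases hF1 : a ∈ F₁ <;> by_cases hF2 : a ∈ F₂
    · rw [if_pos hF1, if_pos hF2]; exact h2 a (Finset.mem_inter.2 ⟨hF1, hF2⟩)
    · rw [if_pos hF1, if_neg hF2]; simpa using h1 a (Finset.mem_union_left _ hF1)
    · rw [if_neg hF1, if_pos hF2]; simpa using h1 a (Finset.mem_union_right _ hF2)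
    · rw [if_neg hF1, if_neg hF2]; omega

lemma eH_singleton (a : Fin n) : eH ({a} : Finset (Fin n)) = Finsupp.single a 1 := by
  rw [eH, Finset.sum_singleton]

/-- the monomial prime associated to a set of variables -/
noncomputable def PC (K : Type) [Field K] {n : ℕ} (C : Finset (Fin n)) :
    Ideal (MvPolynomial (Fin n) K) :=
  Ideal.span ((fun a => (X a : MvPolynomial (Fin n) K)) '' (C : Set (Fin n)))

lemma PC_eq (C : Finset (Fin n)) :
    PC K C = monIdeal K (eH '' ((fun a => ({a} : Finset (Fin n))) '' (C : Set (Fin n)))) := by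
  rw [PC, monIdeal, Set.image_image, Set.image_image]
  congr 1
  refine Set.image_congr fun a _ => ?_
  rw [eH_singleton, X]

lemma mem_PC_iff {C : Finset (Fin n)} {f : MvPolynomial (Fin n) K} :
    f ∈ PC K C ↔ ∀ d ∈ f.support, ∃ a ∈ C, 1 ≤ d a := by
  rw [PC_eq, mem_monIdeal]
  refine forall₂_congr fun d _ => ?_
  constructor
  · rintro ⟨u, ⟨H, ⟨a, ha, rfl⟩, rfl⟩, hle⟩
    refine ⟨a, ha, ?_⟩
    have := hle a
    rw [eH_singleton, Finsupp.single_apply, if_pos rfl] at this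
    exact this
  · rintro ⟨a, ha, h1⟩
    refine ⟨eH {a}, ⟨{a}, ⟨a, ha, rfl⟩, rfl⟩, ?_⟩
    rw [eH_singleton]
    exact Finsupp.single_le_iff.2 h1

lemma mem_PC_sq_iff {C : Finset (Fin n)} {f : MvPolynomial (Fin n) K} :
    f ∈ (PC K C) ^ 2 ↔ ∀ d ∈ f.support,
      ∃ a ∈ C, ∃ b ∈ C, Finsupp.single a 1 + Finsupp.single b 1 ≤ d := by
  classical
  rw [pow_two, PC_eq, monIdeal_mul, mem_monIdeal]
  refine forall₂_congr fun d _ => ?_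
  constructor
  · rintro ⟨u, ⟨x, ⟨hx, ⟨a, ha, rfl⟩, rfl⟩, y, ⟨hy, ⟨b, hb, rfl⟩, rfl⟩, rfl⟩, hle⟩
    rw [eH_singleton, eH_singleton] at hle
    exact ⟨a, ha, b, hb, hle⟩
  · rintro ⟨a, ha, b, hb, hle⟩
    refine ⟨Finsupp.single a 1 + Finsupp.single b 1,
      ⟨eH {a}, ⟨{a}, ⟨a, ha, rfl⟩, rfl⟩, eH {b}, ⟨{b}, ⟨b, hb, rfl⟩, rfl⟩, by
        rw [eH_singleton, eH_singleton]⟩, hle⟩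

lemma PC_isPrime (C : Finset (Fin n)) : (PC K C).IsPrime := by
  classical
  let φ : MvPolynomial (Fin n) K →ₐ[K] MvPolynomial (Fin n) K :=
    aeval (fun a => if a ∈ C then 0 else X a)
  have key : ∀ f : MvPolynomial (Fin n) K, f - φ f ∈ PC K C := by
    intro f
    induction f using MvPolynomial.induction_on with
    | C c => simp [φ]
    | add p q hp hq =>
      have : p + q - φ (p + q) = (p - φ p) + (q - φ q) := by
        rw [map_add]; ring
      rw [this]; exact Ideal.add_mem _ hp hq
    | mul_X p a hp =>
      by_cases ha : a ∈ C
      · have hXa : (X a : MvPolynomial (Fin n) K) ∈ PC K C :=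
          Ideal.subset_span ⟨a, ha, rfl⟩
        have : p * X a - φ (p * X a) = (p - φ p) * X a + (φ p) * (X a - φ (X a)) := by
          rw [map_mul]; ring
        rw [this]
        refine Ideal.add_mem _ (Ideal.mul_mem_right _ _ hp) (Ideal.mul_mem_left _ _ ?_)
        have : φ (X a) = 0 := by simp [φ, ha]
        rw [this, sub_zero]; exact hXa
      · have : φ (X a) = X a := by simp [φ, ha]
        have h2 : p * X a - φ (p * X a) = (p - φ p) * X a := by
          rw [map_mul, this]; ring
        rw [h2]; exact Ideal.mul_mem_right _ _ hp
  have hker : PC K C = RingHom.ker φ.toRingHom := by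
    apply le_antisymm
    · rw [PC, Ideal.span_le]
      rintro x ⟨a, ha, rfl⟩
      show φ (X a) = 0
      simp only [φ, aeval_X]
      rw [if_pos (Finset.mem_coe.1 ha)]
    · intro f hf
      have hf0 : φ f = 0 := hf
      have := key f
      rwa [hf0, sub_zero] at this
  rw [hker]
  exact RingHom.ker_isPrime φ.toRingHom

end Stmt9Aux

namespace Stmt9Aux

variable {n : ℕ} {K : Type} [Field K]

/-- `C` is a vertex cover of the hypergraph `E`. -/
def IsCover (E : Set (Finset (Fin n))) (C : Finset (Fin n)) : Prop :=
  ∀ H ∈ E, (H ∩ C).Nonempty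

lemma exists_min_cover {E : Set (Finset (Fin n))} {C : Finset (Fin n)} (hC : IsCover E C) :
    ∃ C' ⊆ C, IsCover E C' ∧ ∀ a ∈ C', ¬ IsCover E (C'.erase a) := by
  classical
  induction C using Finset.strongInductionOn with
  | _ C ih =>
    by_cases h : ∀ a ∈ C, ¬ IsCover E (C.erase a)
    · exact ⟨C, le_refl _, hC, h⟩
    · push_neg at h
      obtain ⟨a, ha, hcov⟩ := h
      obtain ⟨C', hsub, h1, h2⟩ := ih (C.erase a) (Finset.erase_ssubset ha) hcov
      exact ⟨C', hsub.trans (Finset.erase_subset _ _), h1, h2⟩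

lemma sqfIdeal_le_PC {E : Set (Finset (Fin n))} {C : Finset (Fin n)} (hC : IsCover E C) :
    sqfIdeal K E ≤ PC K C := by
  classical
  rw [sqfIdeal, Ideal.span_le]
  rintro x ⟨H, hH, rfl⟩
  obtain ⟨b, hb⟩ := hC H hH
  rw [Finset.mem_inter] at hb
  have hXb : (X b : MvPolynomial (Fin n) K) ∈ PC K C :=
    Ideal.subset_span ⟨b, hb.2, rfl⟩
  show (∏ a ∈ H, X a : MvPolynomial (Fin n) K) ∈ PC K C
  rw [← Finset.mul_prod_erase _ _ hb.1]
  exact Ideal.mul_mem_right _ _ hXb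

lemma X_mem_PC_iff {C : Finset (Fin n)} {b : Fin n} :
    (X b : MvPolynomial (Fin n) K) ∈ PC K C ↔ b ∈ C := by
  classical
  constructor
  · intro h
    have := mem_PC_iff.1 h (Finsupp.single b 1) ?_
    · obtain ⟨a, ha, h1⟩ := this
      rw [Finsupp.single_apply] at h1
      by_cases hab : b = a
      · exact hab ▸ ha
      · rw [if_neg hab] at h1; omega
    · rw [X, support_monomial, if_neg one_ne_zero]
      exact Finset.mem_singleton_self _
  · intro h
    exact Ideal.subset_span ⟨b, h, rfl⟩

lemma PC_mem_minimalPrimes {E : Set (Finset (Fin n))} {C : Finset (Fin n)}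
    (hC : IsCover E C) (hCm : ∀ a ∈ C, ¬ IsCover E (C.erase a)) :
    PC K C ∈ (sqfIdeal K E).minimalPrimes := by
  classical
  constructor
  · exact ⟨PC_isPrime C, sqfIdeal_le_PC hC⟩
  · rintro Q ⟨hQp, hQI⟩ hQle
    -- show PC K C ≤ Q
    rw [PC, Ideal.span_le]
    rintro x ⟨a, ha, rfl⟩
    have ha' : a ∈ C := ha
    have hnc := hCm a ha'
    rw [IsCover] at hnc
    push_neg at hnc
    obtain ⟨H, hH, hHe⟩ := hnc
    have hprod : (∏ c ∈ H, X c : MvPolynomial (Fin n) K) ∈ Q :=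
      hQI (Ideal.subset_span ⟨H, hH, rfl⟩)
    obtain ⟨b, hbH, hXb⟩ := (Ideal.IsPrime.prod_mem_iff (hp := hQp)).1 hprod
    have hbC : b ∈ C := X_mem_PC_iff.1 (hQle hXb)
    have hba : b = a := by
      by_contra hne
      have : b ∈ H ∩ C.erase a := Finset.mem_inter.2 ⟨hbH, Finset.mem_erase.2 ⟨hne, hbC⟩⟩
      rw [hHe] at this
      exact absurd this (Finset.notMem_empty b)
    exact hba ▸ hXb

end Stmt9Aux

namespace Stmt9Aux

variable {n : ℕ} {K : Type} [Field K]

lemma mul_mem_sq {P : Ideal (MvPolynomial (Fin n) K)} {x y z : MvPolynomial (Fin n) K}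
    (hx : x ∈ P) (hy : y ∈ P) : z * x * y ∈ P ^ 2 := by
  rw [pow_two, mul_assoc]
  exact Ideal.mul_mem_left _ _ (Ideal.mul_mem_mul hx hy)

lemma triangle_monomial_mem_symb2 {E : Set (Finset (Fin n))}
    {H₁ H₂ H₃ : Finset (Fin n)} (h₁ : H₁ ∈ E) (h₂ : H₂ ∈ E) (h₃ : H₃ ∈ E) :
    (∏ a ∈ H₁ ∩ H₂ ∩ H₃, (X a : MvPolynomial (Fin n) K)) *
      (∏ a ∈ H₁ ∪ H₂ ∪ H₃, (X a : MvPolynomial (Fin n) K)) ∈ symb2 (sqfIdeal K E) := by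
  classical
  rw [symb2, Ideal.mem_iInf]
  intro P
  rw [Ideal.mem_iInf]
  intro hP
  obtain ⟨⟨hPp, hPI⟩, -⟩ := hP
  have hgen : ∀ H ∈ E, ∃ b ∈ H, (X b : MvPolynomial (Fin n) K) ∈ P := by
    intro H hH
    exact (Ideal.IsPrime.prod_mem_iff (hp := hPp)).1 (hPI (Ideal.subset_span ⟨H, hH, rfl⟩))
  obtain ⟨a₁, ha₁, hX₁⟩ := hgen H₁ h₁
  obtain ⟨a₂, ha₂, hX₂⟩ := hgen H₂ h₂
  obtain ⟨a₃, ha₃, hX₃⟩ := hgen H₃ h₃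
  have hU : ∀ {b : Fin n}, b ∈ H₁ → b ∈ H₁ ∪ H₂ ∪ H₃ := fun hb =>
    Finset.mem_union_left _ (Finset.mem_union_left _ hb)
  -- helper: if b ≠ c both in the union, the monomial is in P^2
  have hcase2 : ∀ b c : Fin n, b ≠ c → b ∈ H₁ ∪ H₂ ∪ H₃ → c ∈ H₁ ∪ H₂ ∪ H₃ →
      (X b : MvPolynomial (Fin n) K) ∈ P → (X c : MvPolynomial (Fin n) K) ∈ P →
      (∏ a ∈ H₁ ∩ H₂ ∩ H₃, (X a : MvPolynomial (Fin n) K)) *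
        (∏ a ∈ H₁ ∪ H₂ ∪ H₃, (X a : MvPolynomial (Fin n) K)) ∈ P ^ 2 := by
    intro b c hbc hb hc hXb hXc
    have hc' : c ∈ (H₁ ∪ H₂ ∪ H₃).erase b := Finset.mem_erase.2 ⟨Ne.symm hbc, hc⟩
    rw [← Finset.mul_prod_erase _ _ hb, ← Finset.mul_prod_erase _ _ hc']
    have : (∏ a ∈ H₁ ∩ H₂ ∩ H₃, (X a : MvPolynomial (Fin n) K)) *
        (X b * (X c * ∏ a ∈ ((H₁ ∪ H₂ ∪ H₃).erase b).erase c, X a)) =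
        ((∏ a ∈ H₁ ∩ H₂ ∩ H₃, (X a : MvPolynomial (Fin n) K)) *
          (∏ a ∈ ((H₁ ∪ H₂ ∪ H₃).erase b).erase c, X a)) * X b * X c := by ring
    rw [this]
    exact mul_mem_sq hXb hXc
  by_cases h12 : a₁ = a₂
  · by_cases h13 : a₁ = a₃
    · -- all equal, a₁ ∈ triple intersection
      have haI : a₁ ∈ H₁ ∩ H₂ ∩ H₃ :=
        Finset.mem_inter.2 ⟨Finset.mem_inter.2 ⟨ha₁, h12 ▸ ha₂⟩, h13 ▸ ha₃⟩
      have haU : a₁ ∈ H₁ ∪ H₂ ∪ H₃ := hU ha₁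
      rw [← Finset.mul_prod_erase _ _ haI, ← Finset.mul_prod_erase _ _ haU]
      have : (X a₁ * ∏ a ∈ (H₁ ∩ H₂ ∩ H₃).erase a₁, (X a : MvPolynomial (Fin n) K)) *
          (X a₁ * ∏ a ∈ (H₁ ∪ H₂ ∪ H₃).erase a₁, X a) =
          ((∏ a ∈ (H₁ ∩ H₂ ∩ H₃).erase a₁, (X a : MvPolynomial (Fin n) K)) *
            (∏ a ∈ (H₁ ∪ H₂ ∪ H₃).erase a₁, X a)) * X a₁ * X a₁ := by ring
      rw [this]
      exact mul_mem_sq hX₁ hX₁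
    · exact hcase2 a₁ a₃ h13 (hU ha₁) (Finset.mem_union_right _ ha₃) hX₁ hX₃
  · exact hcase2 a₁ a₂ h12 (hU ha₁)
      (Finset.mem_union_left _ (Finset.mem_union_right _ ha₂)) hX₁ hX₂

end Stmt9Aux

namespace Stmt9Aux

variable {n : ℕ} {K : Type} [Field K]

lemma single_pair_le_iff (a b : Fin n) (d : Fin n →₀ ℕ) :
    Finsupp.single a 1 + Finsupp.single b 1 ≤ d ↔
      eH ({a} : Finset (Fin n)) + eH ({b} : Finset (Fin n)) ≤ d := by
  rw [eH_singleton, eH_singleton]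

lemma key_combinatorial {E : Set (Finset (Fin n))}
    (hmin : ∀ H ∈ E, ∀ H' ∈ E, H ⊆ H' → H = H')
    (htri : ∀ H₁ ∈ E, ∀ H₂ ∈ E, ∀ H₃ ∈ E, ∀ i j k : Fin n,
        MakeSpecialTriangle H₁ H₂ H₃ i j k →
          (∏ a ∈ H₁ ∩ H₂ ∩ H₃, (X a : MvPolynomial (Fin n) K)) *
            (∏ a ∈ H₁ ∪ H₂ ∪ H₃, (X a : MvPolynomial (Fin n) K)) ∈ (sqfIdeal K E) ^ 2)
    (d : Fin n →₀ ℕ)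
    (hcov : ∀ C : Finset (Fin n), IsCover E C → (∀ a ∈ C, ¬ IsCover E (C.erase a)) →
      ∃ a ∈ C, ∃ b ∈ C, Finsupp.single a 1 + Finsupp.single b 1 ≤ d) :
    ∃ F₁ ∈ E, ∃ F₂ ∈ E, eH F₁ + eH F₂ ≤ d := by
  classical
  -- extend hcov to all covers
  have hcov' : ∀ C : Finset (Fin n), IsCover E C →
      ∃ a ∈ C, ∃ b ∈ C, Finsupp.single a 1 + Finsupp.single b 1 ≤ d := by
    intro C hC
    obtain ⟨C', hsub, h1, h2⟩ := exists_min_cover hC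
    obtain ⟨a, ha, b, hb, h⟩ := hcov C' h1 h2
    exact ⟨a, hsub ha, b, hsub hb, h⟩
  set G : Finset (Fin n) := d.support with hG
  set S : Finset (Fin n) := G.filter (fun a => d a = 1) with hSdef
  have hGmem : ∀ a : Fin n, a ∈ G ↔ 1 ≤ d a := by
    intro a; rw [hG, Finsupp.mem_support_iff]; omega
  have hSmem : ∀ a : Fin n, a ∈ S ↔ d a = 1 := by
    intro a
    rw [hSdef, Finset.mem_filter, hGmem]
    omega
  -- if a set fails the degree-2 condition, some edge avoids it
  have hW : ∀ W : Finset (Fin n),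
      (∀ a ∈ W, ∀ b ∈ W, ¬ (Finsupp.single a 1 + Finsupp.single b 1 ≤ d)) →
      ∃ H ∈ E, H ∩ W = ∅ := by
    intro W hWc
    by_contra hcon
    push_neg at hcon
    have : IsCover E W := by
      intro H hH
      rw [Finset.nonempty_iff_ne_empty]
      exact Finset.nonempty_iff_ne_empty.1 (hcon H hH)
    obtain ⟨a, ha, b, hb, h⟩ := hcov' W this
    exact hWc a ha b hb h
  have single_le : ∀ a b : Fin n, Finsupp.single a 1 + Finsupp.single b 1 ≤ d →
      1 ≤ d a ∧ 1 ≤ d b ∧ (a = b → 2 ≤ d a) := by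
    intro a b h
    rw [single_pair_le_iff, pair_le_iff] at h
    refine ⟨by simpa using h.1 a (by simp), by simpa using h.1 b (by simp), ?_⟩
    intro hab
    subst hab
    simpa using h.2 a (by simp)
  -- some edge inside G
  have key1 : ∃ H ∈ E, H ⊆ G := by
    have hcond : ∀ a ∈ Finset.univ \ G, ∀ b ∈ Finset.univ \ G,
        ¬ (Finsupp.single a 1 + Finsupp.single b 1 ≤ d) := by
      intro a ha b hb hle
      have := (single_le a b hle).1
      have haG : a ∈ G := (hGmem a).2 this
      exact absurd haG (Finset.mem_sdiff.1 ha).2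
    obtain ⟨H, hH, hHW⟩ := hW (Finset.univ \ G) hcond
    refine ⟨H, hH, fun b hb => ?_⟩
    by_contra hbG
    have : b ∈ H ∩ (Finset.univ \ G) :=
      Finset.mem_inter.2 ⟨hb, Finset.mem_sdiff.2 ⟨Finset.mem_univ _, hbG⟩⟩
    rw [hHW] at this
    exact absurd this (Finset.notMem_empty b)
  -- for each v of multiplicity one, some edge inside G avoiding v
  have key2 : ∀ v ∈ S, ∃ H ∈ E, H ⊆ G ∧ v ∉ H := by
    intro v hv
    have hcond : ∀ a ∈ insert v (Finset.univ \ G), ∀ b ∈ insert v (Finset.univ \ G),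
        ¬ (Finsupp.single a 1 + Finsupp.single b 1 ≤ d) := by
      intro a ha b hb hle
      obtain ⟨h1, h2, h3⟩ := single_le a b hle
      have hav : a = v := by
        rcases Finset.mem_insert.1 ha with h | h
        · exact h
        · exact absurd ((hGmem a).2 h1) (Finset.mem_sdiff.1 h).2
      have hbv : b = v := by
        rcases Finset.mem_insert.1 hb with h | h
        · exact h
        · exact absurd ((hGmem b).2 h2) (Finset.mem_sdiff.1 h).2
      have := h3 (hav.trans hbv.symm)
      rw [hav] at this
      have := (hSmem v).1 hv
      omega
    obtain ⟨H, hH, hHW⟩ := hW (insert v (Finset.univ \ G)) hcond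
    have hdisj : ∀ b ∈ H, b ∉ insert v (Finset.univ \ G) := by
      intro b hb hbW
      have : b ∈ H ∩ insert v (Finset.univ \ G) := Finset.mem_inter.2 ⟨hb, hbW⟩
      rw [hHW] at this
      exact absurd this (Finset.notMem_empty b)
    refine ⟨H, hH, fun b hb => ?_, fun hvH => hdisj v hvH (Finset.mem_insert_self _ _)⟩
    by_contra hbG
    exact hdisj b hb (Finset.mem_insert.2 (Or.inr
      (Finset.mem_sdiff.2 ⟨Finset.mem_univ _, hbG⟩)))
  by_contra hgoal
  push_neg at hgoal
  -- any two (not nec. distinct) edges inside G meet in S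
  have hmeet : ∀ F₁, F₁ ∈ E → ∀ F₂, F₂ ∈ E → F₁ ⊆ G → F₂ ⊆ G →
      ∃ w, w ∈ F₁ ∩ F₂ ∧ w ∈ S := by
    intro F₁ h1 F₂ h2 hg1 hg2
    have hng := hgoal F₁ h1 F₂ h2
    rw [pair_le_iff, not_and_or] at hng
    have hsub : ∀ a ∈ F₁ ∪ F₂, 1 ≤ d a := by
      intro a ha
      rcases Finset.mem_union.1 ha with h | h
      · exact (hGmem a).1 (hg1 h)
      · exact (hGmem a).1 (hg2 h)
    rcases hng with h | h
    · exact absurd hsub h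
    · push_neg at h
      obtain ⟨w, hw, hw2⟩ := h
      have hwG : w ∈ G := hg1 (Finset.mem_inter.1 hw).1
      have := (hGmem w).1 hwG
      exact ⟨w, hw, (hSmem w).2 (by omega)⟩
  -- minimize |(H₁ ∩ H₂) ∩ S| over distinct pairs of edges inside G
  have hPex : ∃ m : ℕ, ∃ H₁, H₁ ∈ E ∧ H₁ ⊆ G ∧ ∃ H₂, H₂ ∈ E ∧ H₂ ⊆ G ∧ H₁ ≠ H₂ ∧
      ((H₁ ∩ H₂) ∩ S).card = m := by
    obtain ⟨H₀, hH₀, hH₀G⟩ := key1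
    obtain ⟨w, hw, hwS⟩ := hmeet H₀ hH₀ H₀ hH₀ hH₀G hH₀G
    obtain ⟨H', hH', hH'G, hwH'⟩ := key2 w hwS
    have hne : H₀ ≠ H' := fun h => hwH' (h ▸ (Finset.mem_inter.1 hw).1)
    exact ⟨_, H₀, hH₀, hH₀G, H', hH', hH'G, hne, rfl⟩
  obtain ⟨H₁, hH₁E, hH₁G, H₂, hH₂E, hH₂G, hne12, hcard⟩ := Nat.find_spec hPex
  set m := Nat.find hPex with hm
  have hmin' : ∀ A B : Finset (Fin n), A ∈ E → A ⊆ G → B ∈ E → B ⊆ G → A ≠ B →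
      m ≤ ((A ∩ B) ∩ S).card := by
    intro A B hA hAG hB hBG hAB
    exact Nat.find_min' hPex ⟨A, hA, hAG, B, hB, hBG, hAB, rfl⟩
  obtain ⟨v, hv, hvS⟩ := hmeet H₁ hH₁E H₂ hH₂E hH₁G hH₂G
  have hvin : v ∈ (H₁ ∩ H₂) ∩ S := Finset.mem_inter.2 ⟨hv, hvS⟩
  have hv1 : v ∈ H₁ := (Finset.mem_inter.1 hv).1
  have hv2 : v ∈ H₂ := (Finset.mem_inter.1 hv).2
  obtain ⟨H₃, hH₃E, hH₃G, hvH₃⟩ := key2 v hvS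
  have h13 : H₁ ≠ H₃ := fun h => hvH₃ (h ▸ hv1)
  have h23 : H₂ ≠ H₃ := fun h => hvH₃ (h ▸ hv2)
  have hcard_lt : (((H₁ ∩ H₂) ∩ S).erase v).card < m := by
    rw [← hcard]
    exact Finset.card_erase_lt_of_mem hvin
  -- find j ∈ H₁ ∩ H₃ with j ∉ H₂
  have hj : ∃ j, j ∈ H₁ ∧ j ∈ H₃ ∧ j ∉ H₂ := by
    by_contra h
    push_neg at h
    have hsub : (H₁ ∩ H₃) ∩ S ⊆ ((H₁ ∩ H₂) ∩ S).erase v := by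
      intro x hx
      obtain ⟨hx13, hxS⟩ := Finset.mem_inter.1 hx
      obtain ⟨hx1, hx3⟩ := Finset.mem_inter.1 hx13
      have hx2 : x ∈ H₂ := h x hx1 hx3
      refine Finset.mem_erase.2 ⟨fun hxeq => hvH₃ (hxeq ▸ hx3), ?_⟩
      exact Finset.mem_inter.2 ⟨Finset.mem_inter.2 ⟨hx1, hx2⟩, hxS⟩
    have h1 := Finset.card_le_card hsub
    have h2 := hmin' H₁ H₃ hH₁E hH₁G hH₃E hH₃G h13
    omega
  have hi : ∃ i, i ∈ H₂ ∧ i ∈ H₃ ∧ i ∉ H₁ := by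
    by_contra h
    push_neg at h
    have hsub : (H₂ ∩ H₃) ∩ S ⊆ ((H₁ ∩ H₂) ∩ S).erase v := by
      intro x hx
      obtain ⟨hx23, hxS⟩ := Finset.mem_inter.1 hx
      obtain ⟨hx2, hx3⟩ := Finset.mem_inter.1 hx23
      have hx1 : x ∈ H₁ := h x hx2 hx3
      refine Finset.mem_erase.2 ⟨fun hxeq => hvH₃ (hxeq ▸ hx3), ?_⟩
      exact Finset.mem_inter.2 ⟨Finset.mem_inter.2 ⟨hx1, hx2⟩, hxS⟩
    have h1 := Finset.card_le_card hsub
    have h2 := hmin' H₂ H₃ hH₂E hH₂G hH₃E hH₃G h23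
    omega
  obtain ⟨j, hj1, hj3, hj2⟩ := hj
  obtain ⟨i, hi2, hi3, hi1⟩ := hi
  have htriangle : MakeSpecialTriangle H₁ H₂ H₃ i j v := by
    refine ⟨fun h => hi1 (h ▸ hj1), fun h => hj2 (h ▸ hv2), fun h => hi1 (h ▸ hv1),
      ?_, ?_, ?_⟩
    · ext a
      simp only [Finset.mem_inter, Finset.mem_insert, Finset.mem_singleton]
      constructor
      · rintro ⟨ha, (rfl | rfl | rfl)⟩
        · exact absurd ha hi1
        · exact Or.inl rfl
        · exact Or.inr rfl
      · rintro (rfl | rfl)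
        · exact ⟨hj1, Or.inr (Or.inl rfl)⟩
        · exact ⟨hv1, Or.inr (Or.inr rfl)⟩
    · ext a
      simp only [Finset.mem_inter, Finset.mem_insert, Finset.mem_singleton]
      constructor
      · rintro ⟨ha, (rfl | rfl | rfl)⟩
        · exact Or.inl rfl
        · exact absurd ha hj2
        · exact Or.inr rfl
      · rintro (rfl | rfl)
        · exact ⟨hi2, Or.inl rfl⟩
        · exact ⟨hv2, Or.inr (Or.inr rfl)⟩
    · ext a
      simp only [Finset.mem_inter, Finset.mem_insert, Finset.mem_singleton]
      constructor
      · rintro ⟨ha, (rfl | rfl | rfl)⟩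
        · exact Or.inl rfl
        · exact Or.inr rfl
        · exact absurd ha hvH₃
      · rintro (rfl | rfl)
        · exact ⟨hi3, Or.inl rfl⟩
        · exact ⟨hj3, Or.inr (Or.inl rfl)⟩
  have hmono := htri H₁ hH₁E H₂ hH₂E H₃ hH₃E i j v htriangle
  rw [mem_sq_iff] at hmono
  have heq : (∏ a ∈ H₁ ∩ H₂ ∩ H₃, (X a : MvPolynomial (Fin n) K)) *
      (∏ a ∈ H₁ ∪ H₂ ∪ H₃, (X a : MvPolynomial (Fin n) K)) =
      monomial (eH (H₁ ∩ H₂ ∩ H₃) + eH (H₁ ∪ H₂ ∪ H₃)) (1 : K) := by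
    rw [prod_X_eq, prod_X_eq, monomial_mul, one_mul]
  obtain ⟨F₁, hF₁, F₂, hF₂, hle⟩ := hmono (eH (H₁ ∩ H₂ ∩ H₃) + eH (H₁ ∪ H₂ ∪ H₃)) (by
    rw [heq, support_monomial, if_neg one_ne_zero]
    exact Finset.mem_singleton_self _)
  rw [pair_le_iff] at hle
  -- unpack: F₁ ∪ F₂ ⊆ H₁ ∪ H₂ ∪ H₃ and F₁ ∩ F₂ ⊆ H₁ ∩ H₂ ∩ H₃
  have hval : ∀ a : Fin n, (eH (H₁ ∩ H₂ ∩ H₃) + eH (H₁ ∪ H₂ ∪ H₃)) a =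
      (if a ∈ H₁ ∩ H₂ ∩ H₃ then 1 else 0) + (if a ∈ H₁ ∪ H₂ ∪ H₃ then 1 else 0) := by
    intro a; rw [Finsupp.add_apply, eH_apply, eH_apply]
  have hFsubU : F₁ ∪ F₂ ⊆ H₁ ∪ H₂ ∪ H₃ := by
    intro a ha
    have := hle.1 a ha
    rw [hval] at this
    by_contra hna
    have hna2 : a ∉ H₁ ∩ H₂ ∩ H₃ := fun h =>
      hna (Finset.mem_union_left _ (Finset.mem_union_left _
        (Finset.mem_inter.1 (Finset.mem_inter.1 h).1).1))
    rw [if_neg hna, if_neg hna2] at this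
    omega
  have hFsubI : F₁ ∩ F₂ ⊆ H₁ ∩ H₂ ∩ H₃ := by
    intro a ha
    have := hle.2 a ha
    rw [hval] at this
    by_contra hna
    rw [if_neg hna] at this
    by_cases h : a ∈ H₁ ∪ H₂ ∪ H₃
    · rw [if_pos h] at this; omega
    · rw [if_neg h] at this; omega
  have hUG : H₁ ∪ H₂ ∪ H₃ ⊆ G :=
    Finset.union_subset (Finset.union_subset hH₁G hH₂G) hH₃G
  have hF₁G : F₁ ⊆ G := fun a ha => hUG (hFsubU (Finset.mem_union_left _ ha))
  have hF₂G : F₂ ⊆ G := fun a ha => hUG (hFsubU (Finset.mem_union_right _ ha))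
  have hFne : F₁ ≠ F₂ := by
    intro h
    subst h
    have hsub : F₁ ⊆ H₁ ∩ H₂ ∩ H₃ := by
      intro a ha; exact hFsubI (Finset.mem_inter.2 ⟨ha, ha⟩)
    have e1 : F₁ = H₁ := hmin F₁ hF₁ H₁ hH₁E (fun a ha =>
      (Finset.mem_inter.1 (Finset.mem_inter.1 (hsub ha)).1).1)
    have e2 : F₁ = H₂ := hmin F₁ hF₁ H₂ hH₂E (fun a ha =>
      (Finset.mem_inter.1 (Finset.mem_inter.1 (hsub ha)).1).2)
    exact hne12 (e1 ▸ e2)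
  have hsubF : (F₁ ∩ F₂) ∩ S ⊆ ((H₁ ∩ H₂) ∩ S).erase v := by
    intro x hx
    obtain ⟨hx12, hxS⟩ := Finset.mem_inter.1 hx
    have hx3 := hFsubI hx12
    obtain ⟨hx12', hx3'⟩ := Finset.mem_inter.1 hx3
    refine Finset.mem_erase.2 ⟨fun hxeq => hvH₃ (hxeq ▸ hx3'), ?_⟩
    exact Finset.mem_inter.2 ⟨hx12', hxS⟩
  have h1 := Finset.card_le_card hsubF
  have h2 := hmin' F₁ F₂ hF₁ hF₁G hF₂ hF₂G hFne
  omega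

end Stmt9Aux

/-- For a squarefree monomial ideal `I` with minimal generators `{x^H : H ∈ E}`:
`I^(2) = I²` iff for every special triangle made by minimal generators `H₁, H₂, H₃`,
the monomial `x^{H₁∩H₂∩H₃} · x^{H₁∪H₂∪H₃}` lies in `I²`. -/
theorem stmt9 (n : ℕ) (K : Type) [Field K] (E : Set (Finset (Fin n)))
    (hmin : ∀ H ∈ E, ∀ H' ∈ E, H ⊆ H' → H = H') :
    symb2 (sqfIdeal K E) = (sqfIdeal K E) ^ 2 ↔
      ∀ H₁ ∈ E, ∀ H₂ ∈ E, ∀ H₃ ∈ E, ∀ i j k : Fin n,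
        MakeSpecialTriangle H₁ H₂ H₃ i j k →
          (∏ a ∈ H₁ ∩ H₂ ∩ H₃, (X a : MvPolynomial (Fin n) K)) *
            (∏ a ∈ H₁ ∪ H₂ ∪ H₃, (X a : MvPolynomial (Fin n) K)) ∈ (sqfIdeal K E) ^ 2 := by
  classical
  constructor
  · intro h H₁ h₁ H₂ h₂ H₃ h₃ i j k _
    rw [← h]
    exact Stmt9Aux.triangle_monomial_mem_symb2 h₁ h₂ h₃
  · intro htri
    apply le_antisymm
    · intro f hf
      rw [Stmt9Aux.mem_sq_iff]
      intro d hd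
      have hPC : ∀ C : Finset (Fin n), Stmt9Aux.IsCover E C →
          (∀ a ∈ C, ¬ Stmt9Aux.IsCover E (C.erase a)) →
          f ∈ (Stmt9Aux.PC K C) ^ 2 := by
        intro C hC hCm
        have hmem := Stmt9Aux.PC_mem_minimalPrimes (K := K) hC hCm
        rw [symb2, Ideal.mem_iInf] at hf
        have := hf (Stmt9Aux.PC K C)
        rw [Ideal.mem_iInf] at this
        exact this hmem
      exact Stmt9Aux.key_combinatorial hmin htri d (fun C hC hCm =>
        Stmt9Aux.mem_PC_sq_iff.1 (hPC C hC hCm) d hd)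
    · rw [symb2]
      refine le_iInf fun P => le_iInf fun hP => ?_
      exact Ideal.pow_right_mono hP.1.2 2
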